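/- Let m ≥ 4 be a positive even integer. Let T ⊆ Z_m with |T| = m - 2, and let a, b ∉ T with a ≠ b. Set A = T ∪ {a} and B = T ∪ {b}. If R_A(n) = R_B(n) for all n ∈ Z_m, then b = a + m/2. -/

import Mathlib

open Finset

/-- Representation function: number of ordered pairs (a, a') in A × A with a + a' = n. -/
def repFn {m : ℕ} (A : Finset (ZMod m)) (n : ZMod m) : ℕ :=
  ((A ×ˢ A).filter (fun p => p.1 + p.2 = n)).card

lemma repFn_eq {m : ℕ} (A : Finset (ZMod m)) (n : ZMod m) :
    repFn A n = (A.filter (fun x => n - x ∈ A)).card := by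
  unfold repFn
  apply Finset.card_nbij' (fun p => p.1) (fun x => (x, n - x))
  · intro p hp
    simp only [mem_coe, mem_filter, mem_product] at hp ⊢
    obtain ⟨⟨h1, h2⟩, h3⟩ := hp
    refine ⟨h1, ?_⟩
    rwa [show n - p.1 = p.2 by linear_combination -h3]
  · intro x hx
    simp only [mem_coe, mem_filter, mem_product] at hx ⊢
    exact ⟨⟨hx.1, hx.2⟩, by ring⟩
  · intro p hp
    simp only [mem_coe, mem_filter, mem_product] at hp
    have h : n - p.1 = p.2 := by linear_combination -hp.2
    simp [h]
  · intro x hx; rfl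

lemma filter_sdiff {m : ℕ} [NeZero m] (c n : ZMod m) :
    ((univ \ {c} : Finset (ZMod m)).filter (fun x => n - x ∈ univ \ {c}))
      = univ \ {c, n - c} := by
  ext x
  simp only [mem_filter, mem_sdiff, mem_univ, mem_insert, mem_singleton, true_and]
  constructor
  · rintro ⟨h1, h2⟩
    push_neg
    exact ⟨h1, fun h => h2 (by rw [h]; ring)⟩
  · intro h
    push_neg at h
    exact ⟨h.1, fun hc => h.2 (by linear_combination -hc)⟩

theorem stmt14 (m : ℕ) [NeZero m] (hm : Even m) (hm4 : 4 ≤ m)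
    (T : Finset (ZMod m)) (hT : T.card = m - 2)
    (a b : ZMod m) (ha : a ∉ T) (hb : b ∉ T) (hab : a ≠ b)
    (hR : ∀ n : ZMod m, repFn (insert a T) n = repFn (insert b T) n) :
    b = a + ((m / 2 : ℕ) : ZMod m) := by
  have hcardU : (univ : Finset (ZMod m)).card = m := by
    simp [ZMod.card]
  have hTsub : T ⊆ univ \ {a, b} := by
    intro x hx
    simp only [mem_sdiff, mem_univ, mem_insert, mem_singleton, true_and]
    push_neg
    exact ⟨fun h => ha (h ▸ hx), fun h => hb (h ▸ hx)⟩
  have hcard2 : ({a, b} : Finset (ZMod m)).card = 2 := by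
    rw [card_insert_of_notMem (by simpa using hab), card_singleton]
  have hTeq : T = univ \ {a, b} := by
    apply Finset.eq_of_subset_of_card_le hTsub
    rw [card_sdiff_of_subset (subset_univ _), hcardU, hcard2, hT]
  have hA : insert a T = univ \ {b} := by
    rw [hTeq]; ext x
    simp only [mem_insert, mem_sdiff, mem_univ, mem_singleton, true_and]
    constructor
    · rintro (rfl | h)
      · exact hab
      · push_neg at h; exact h.2
    · intro h
      by_cases hxa : x = a
      · exact Or.inl hxa
      · exact Or.inr (by push_neg; exact ⟨hxa, h⟩)
  have hB : insert b T = univ \ {a} := by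
    rw [hTeq]; ext x
    simp only [mem_insert, mem_sdiff, mem_univ, mem_singleton, true_and]
    constructor
    · rintro (rfl | h)
      · exact hab.symm
      · push_neg at h; exact h.1
    · intro h
      by_cases hxb : x = b
      · exact Or.inl hxb
      · exact Or.inr (by push_neg; exact ⟨h, hxb⟩)
  have hkey := hR (b + b)
  rw [hA, hB, repFn_eq, repFn_eq, filter_sdiff, filter_sdiff] at hkey
  have hbb : b + b - b = b := by ring
  rw [hbb] at hkey
  have haa : a + a = b + b := by
    by_contra hne
    have hne' : a ≠ b + b - a := fun h => hne (by linear_combination h)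
    have hL : ({b, b} : Finset (ZMod m)).card = 1 := by simp
    have hRc : ({a, b + b - a} : Finset (ZMod m)).card = 2 := by
      rw [card_insert_of_notMem (by simpa using hne'), card_singleton]
    rw [card_sdiff_of_subset (subset_univ _), card_sdiff_of_subset (subset_univ _), hcardU, hL, hRc] at hkey
    omega
  set c := b - a with hc
  have hcc : c + c = 0 := by rw [hc]; linear_combination -haa
  have hcne : c ≠ 0 := sub_ne_zero.mpr hab.symm
  have hv : ((c.val : ℕ) : ZMod m) = c := by
    rw [ZMod.natCast_val, ZMod.cast_id]
  have h0 : ((2 * c.val : ℕ) : ZMod m) = 0 := by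
    push_cast [hv]
    linear_combination hcc
  have hdvd : m ∣ 2 * c.val := (ZMod.natCast_eq_zero_iff _ _).mp h0
  have hlt : c.val < m := ZMod.val_lt c
  have hvne : c.val ≠ 0 := fun h => hcne (by rw [← hv, h]; simp)
  have hval : c.val = m / 2 := by
    obtain ⟨k, hk⟩ := hdvd
    have h2 : m * k < m * 2 := by rw [← hk]; omega
    have hk2 : k < 2 := Nat.lt_of_mul_lt_mul_left h2
    have hk0 : k ≠ 0 := by rintro rfl; rw [Nat.mul_zero] at hk; omega
    have hk1 : k = 1 := by omega
    rw [hk1, Nat.mul_one] at hk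
    omega
  have : b = a + c := by rw [hc]; ring
  rw [this, ← hv, hval]
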